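/- For λ with 1/2 ≤ λ ≤ 1, the function f₄(z) = z/(1 - √(2λ) z + λz²) has second and third Taylor coefficients a₂ = √(2λ) and a₃ = λ, and its logarithmic coefficients satisfy |γ₂| - |γ₁| = -√(2λ)/2. -/

import Mathlib

open Filter

lemma aux_derivs (a l : ℂ) (ha : a ^ 2 = 2 * l) :
    iteratedDeriv 2 (fun z : ℂ => z / (1 - a * z + l * z ^ 2)) 0 = 2 * a ∧
    iteratedDeriv 3 (fun z : ℂ => z / (1 - a * z + l * z ^ 2)) 0 = 6 * l := by
  set D : ℂ → ℂ := fun z => 1 - a * z + l * z ^ 2 with hDdef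
  set f : ℂ → ℂ := fun z => z / D z with hfdef
  set f1 : ℂ → ℂ := fun z => (1 - l * z ^ 2) / (D z) ^ 2 with hf1def
  set f2 : ℂ → ℂ := fun z => (2 * a - 6 * l * z + 2 * l ^ 2 * z ^ 3) / (D z) ^ 3 with hf2def
  have hD : ∀ z : ℂ, HasDerivAt D (-a + 2 * l * z) z := by
    intro z
    have h1 : HasDerivAt D (0 - a * 1 + l * (↑2 * z ^ 1)) z :=
      ((hasDerivAt_const z (1:ℂ)).sub ((hasDerivAt_id z).const_mul a)).add
        ((hasDerivAt_pow 2 z).const_mul l)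
    convert h1 using 1; push_cast; ring
  have hScont : Continuous D := by
    simp only [hDdef]; fun_prop
  have hSopen : IsOpen {z : ℂ | D z ≠ 0} := isOpen_compl_singleton.preimage hScont
  have hS0 : D 0 ≠ 0 := by simp [hDdef]
  -- derivative of f
  have hf' : ∀ z, D z ≠ 0 → HasDerivAt f (f1 z) z := by
    intro z hz
    have h := (hasDerivAt_id z).div (hD z) hz
    refine h.congr_deriv ?_; symm
    simp only [hf1def]
    congr 1
    simp only [hDdef, id_eq]; ring
  have hf1' : ∀ z, D z ≠ 0 → HasDerivAt f1 (f2 z) z := by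
    intro z hz
    have hnum : HasDerivAt (fun z : ℂ => 1 - l * z ^ 2) (-(2 * l * z)) z := by
      have h1 : HasDerivAt (fun z : ℂ => 1 - l * z ^ 2) (0 - l * (↑2 * z ^ 1)) z :=
        (hasDerivAt_const z (1:ℂ)).sub ((hasDerivAt_pow 2 z).const_mul l)
      convert h1 using 1; push_cast; ring
    have hden : HasDerivAt (fun z => (D z) ^ 2) (↑2 * (D z) ^ 1 * (-a + 2 * l * z)) z :=
      (hD z).pow 2
    have h := hnum.div hden (pow_ne_zero 2 hz)
    refine h.congr_deriv ?_; symm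
    simp only [hf2def]
    rw [div_eq_div_iff (pow_ne_zero 3 hz) (pow_ne_zero 2 (pow_ne_zero 2 hz))]
    simp only [hDdef]; push_cast; ring
  have hf2' : HasDerivAt f2 (6 * l) 0 := by
    have hnum : HasDerivAt (fun z : ℂ => 2 * a - 6 * l * z + 2 * l ^ 2 * z ^ 3)
        (-(6 * l) + 6 * l ^ 2 * 0 ^ 2) 0 := by
      have h1 : HasDerivAt (fun z : ℂ => 2 * a - 6 * l * z + 2 * l ^ 2 * z ^ 3)
          (0 - 6 * l * 1 + 2 * l ^ 2 * (↑3 * (0:ℂ) ^ 2)) 0 :=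
        ((hasDerivAt_const 0 (2*a)).sub ((hasDerivAt_id 0).const_mul (6*l))).add
          ((hasDerivAt_pow 3 0).const_mul (2 * l ^ 2))
      convert h1 using 1; push_cast; ring
    have hden : HasDerivAt (fun z => (D z) ^ 3) (↑3 * (D 0) ^ 2 * (-a + 2 * l * 0)) 0 :=
      (hD 0).pow 3
    have h := hnum.div hden (pow_ne_zero 3 hS0)
    refine h.congr_deriv ?_; symm
    simp only [hDdef]
    ring_nf
    rw [ha]; ring
  -- eventual equalities
  have E1 : ∀ z, D z ≠ 0 → deriv f =ᶠ[nhds z] f1 := by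
    intro z hz
    filter_upwards [hSopen.mem_nhds hz] with w hw
    exact (hf' w hw).deriv
  have E2 : deriv (deriv f) =ᶠ[nhds 0] f2 := by
    filter_upwards [hSopen.mem_nhds hS0] with w hw
    rw [(E1 w hw).deriv_eq]
    exact (hf1' w hw).deriv
  have h2 : iteratedDeriv 2 f 0 = 2 * a := by
    rw [show (2:ℕ) = 1 + 1 from rfl, iteratedDeriv_succ, iteratedDeriv_one,
      (E1 0 hS0).deriv_eq, (hf1' 0 hS0).deriv]
    simp [hf2def, hDdef]
  refine ⟨h2, ?_⟩
  rw [show (3:ℕ) = 2 + 1 from rfl, iteratedDeriv_succ,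
    show (2:ℕ) = 1 + 1 from rfl, iteratedDeriv_succ, iteratedDeriv_one,
    E2.deriv_eq, hf2'.deriv]

theorem stmt_5 (lam : ℝ) (hlam : 1 / 2 ≤ lam) (hlam1 : lam ≤ 1) :
    (iteratedDeriv 2 (fun z : ℂ =>
        z / (1 - (Real.sqrt (2 * lam) : ℂ) * z + (lam : ℂ) * z ^ 2)) 0) / 2
      = (Real.sqrt (2 * lam) : ℂ) ∧
    (iteratedDeriv 3 (fun z : ℂ =>
        z / (1 - (Real.sqrt (2 * lam) : ℂ) * z + (lam : ℂ) * z ^ 2)) 0) / 6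
      = (lam : ℂ) ∧
    (let a2 : ℂ := (Real.sqrt (2 * lam) : ℂ)
     let a3 : ℂ := (lam : ℂ)
     let γ1 : ℂ := a2 / 2
     let γ2 : ℂ := (1 / 2) * (a3 - (1 / 2) * a2 ^ 2)
     ‖γ2‖ - ‖γ1‖ = -Real.sqrt (2 * lam) / 2) := by
  have h2l : (0:ℝ) ≤ 2 * lam := by linarith
  have ha : ((Real.sqrt (2 * lam) : ℂ)) ^ 2 = 2 * (lam : ℂ) := by
    rw [← Complex.ofReal_pow, Real.sq_sqrt h2l]
    push_cast; ring
  obtain ⟨h2, h3⟩ := aux_derivs (Real.sqrt (2 * lam) : ℂ) (lam : ℂ) ha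
  refine ⟨by rw [h2]; ring, by rw [h3]; ring, ?_⟩
  simp only
  rw [show (1/2 : ℂ) * ((lam:ℂ) - (1/2) * ((Real.sqrt (2 * lam) : ℂ)) ^ 2) = 0 by
    rw [ha]; ring]
  rw [norm_zero]
  rw [show ((Real.sqrt (2 * lam) : ℂ)) / 2 = ((Real.sqrt (2 * lam) / 2 : ℝ) : ℂ) by
    push_cast; ring]
  rw [Complex.norm_real, Real.norm_eq_abs, abs_of_nonneg (by positivity)]
  ring
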